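/- Let 0 < α < γ < L, c₀ > 0, λ ∈ ℝ \ {0}, and let θ : [0,L] → ℝ be continuously differentiable. Let z, g₃ : [0,L] → ℂ be continuously differentiable with z(0) = z(L) = 0, let y : [0,L] → ℂ be twice continuously differentiable, and let v, g₄ : [0,L] → ℂ be continuous, satisfying on (0,L): i λ y − z = g₃ and i λ z − y″ − c(·) v = g₄. Then ∫₀^L θ |y′|² dx = ∫₀^L θ |z|² dx + Im( λ⁻¹ ∫₀^L θ′ y′ z̄ dx ) − Im( λ⁻¹ ∫₀^L c(·) θ v z̄ dx ) − Im( λ⁻¹ ∫₀^L θ ḡ₃′ y′ dx ) − Im( λ⁻¹ ∫₀^L θ g₄ z̄ dx ). -/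

import Mathlib

open MeasureTheory Complex

/-- Cut-off multiplier identity transferring the estimate on `z` to an estimate on
`y′`, where `c(x) = c₀` on `(α,γ)` and `0` elsewhere. -/
theorem stmt_12 (L α γ c₀ lam : ℝ)
    (hα : 0 < α) (hαγ : α < γ) (hγL : γ < L) (hc₀ : 0 < c₀) (hlam : lam ≠ 0)
    (c : ℝ → ℝ) (hc : ∀ x, c x = if α < x ∧ x < γ then c₀ else 0)
    (θ θ' : ℝ → ℝ)
    (hθ : ∀ x ∈ Set.Icc (0:ℝ) L, HasDerivAt θ (θ' x) x)
    (hθ'c : ContinuousOn θ' (Set.Icc 0 L))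
    (z z' g₃ g₃' : ℝ → ℂ)
    (hz : ∀ x ∈ Set.Icc (0:ℝ) L, HasDerivAt z (z' x) x)
    (hz'c : ContinuousOn z' (Set.Icc 0 L))
    (hg₃ : ∀ x ∈ Set.Icc (0:ℝ) L, HasDerivAt g₃ (g₃' x) x)
    (hg₃'c : ContinuousOn g₃' (Set.Icc 0 L))
    (hz0 : z 0 = 0) (hzL : z L = 0)
    (y y' y'' : ℝ → ℂ)
    (hy : ∀ x ∈ Set.Icc (0:ℝ) L, HasDerivAt y (y' x) x)
    (hy' : ∀ x ∈ Set.Icc (0:ℝ) L, HasDerivAt y' (y'' x) x)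
    (hy''c : ContinuousOn y'' (Set.Icc 0 L))
    (v g₄ : ℝ → ℂ)
    (hvc : ContinuousOn v (Set.Icc 0 L)) (hg₄c : ContinuousOn g₄ (Set.Icc 0 L))
    (heq3 : ∀ x ∈ Set.Ioo (0:ℝ) L, Complex.I * (lam : ℂ) * y x - z x = g₃ x)
    (heq4 : ∀ x ∈ Set.Ioo (0:ℝ) L,
      Complex.I * (lam : ℂ) * z x - y'' x - (c x : ℂ) * v x = g₄ x) :
    ∫ x in (0:ℝ)..L, θ x * ‖y' x‖ ^ 2
      = (∫ x in (0:ℝ)..L, θ x * ‖z x‖ ^ 2)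
        + ((lam : ℂ)⁻¹ * ∫ x in (0:ℝ)..L,
            (θ' x : ℂ) * y' x * (starRingEnd ℂ) (z x)).im
        - ((lam : ℂ)⁻¹ * ∫ x in (0:ℝ)..L,
            (c x : ℂ) * (θ x : ℂ) * v x * (starRingEnd ℂ) (z x)).im
        - ((lam : ℂ)⁻¹ * ∫ x in (0:ℝ)..L,
            (θ x : ℂ) * (starRingEnd ℂ) (g₃' x) * y' x).im
        - ((lam : ℂ)⁻¹ * ∫ x in (0:ℝ)..L,
            (θ x : ℂ) * g₄ x * (starRingEnd ℂ) (z x)).im := by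
  have h0L : (0:ℝ) ≤ L := by linarith
  have hIcc : Set.uIcc (0:ℝ) L = Set.Icc 0 L := Set.uIcc_of_le h0L
  set K := Set.Icc (0:ℝ) L with hK
  -- continuity facts
  have hθc : ContinuousOn θ K := fun x hx => ((hθ x hx).continuousAt).continuousWithinAt
  have hzc : ContinuousOn z K := fun x hx => ((hz x hx).continuousAt).continuousWithinAt
  have hy'cont : ContinuousOn y' K := fun x hx => ((hy' x hx).continuousAt).continuousWithinAt
  have hθC : ContinuousOn (fun x => (θ x : ℂ)) K := Complex.continuous_ofReal.comp_continuousOn hθc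
  have hθ'C : ContinuousOn (fun x => (θ' x : ℂ)) K := Complex.continuous_ofReal.comp_continuousOn hθ'c
  have hconj : Continuous (starRingEnd ℂ) := continuous_conj
  have hzb : ContinuousOn (fun x => (starRingEnd ℂ) (z x)) K := hconj.comp_continuousOn hzc
  have hy'b : ContinuousOn (fun x => (starRingEnd ℂ) (y' x)) K := hconj.comp_continuousOn hy'cont
  have hg₃'b : ContinuousOn (fun x => (starRingEnd ℂ) (g₃' x)) K := hconj.comp_continuousOn hg₃'c
  -- derivative of conj z and of θ as complex
  have hzbar : ∀ x ∈ K, HasDerivAt (fun t => (starRingEnd ℂ) (z t)) ((starRingEnd ℂ) (z' x)) x :=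
    fun x hx => (hz x hx).star
  have hθCd : ∀ x ∈ K, HasDerivAt (fun t => (θ t : ℂ)) ((θ' x : ℂ)) x :=
    fun x hx => (hθ x hx).ofReal_comp
  -- F and its derivative
  set F : ℝ → ℂ := fun x => (θ x : ℂ) * y' x * (starRingEnd ℂ) (z x) with hFdef
  set F' : ℝ → ℂ := fun x =>
    ((θ' x : ℂ) * y' x + (θ x : ℂ) * y'' x) * (starRingEnd ℂ) (z x)
      + (θ x : ℂ) * y' x * (starRingEnd ℂ) (z' x) with hF'def
  have hFd : ∀ x ∈ Set.uIcc (0:ℝ) L, HasDerivAt F (F' x) x := by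
    intro x hx
    rw [hIcc] at hx
    exact ((hθCd x hx).mul (hy' x hx)).mul (hzbar x hx)
  have hF'cont : ContinuousOn F' K :=
    (((hθ'C.mul hy'cont).add (hθC.mul hy''c)).mul hzb).add
      ((hθC.mul hy'cont).mul (hconj.comp_continuousOn hz'c))
  have hF'int : IntervalIntegrable F' volume 0 L :=
    (hF'cont.mono (by rw [hIcc])).intervalIntegrable
  have hFint : ∫ x in (0:ℝ)..L, F' x = 0 := by
    rw [intervalIntegral.integral_eq_sub_of_hasDerivAt hFd hF'int]
    simp [hFdef, hz0, hzL]
  -- the six integrands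
  set A : ℝ → ℂ := fun x => (θ' x : ℂ) * y' x * (starRingEnd ℂ) (z x) with hAdef
  set Zc : ℝ → ℂ := fun x => (θ x : ℂ) * (z x * (starRingEnd ℂ) (z x)) with hZcdef
  set B : ℝ → ℂ := fun x => (c x : ℂ) * (θ x : ℂ) * v x * (starRingEnd ℂ) (z x) with hBdef
  set D : ℝ → ℂ := fun x => (θ x : ℂ) * g₄ x * (starRingEnd ℂ) (z x) with hDdef
  set Yc : ℝ → ℂ := fun x => (θ x : ℂ) * (y' x * (starRingEnd ℂ) (y' x)) with hYcdef
  set C : ℝ → ℂ := fun x => (θ x : ℂ) * (starRingEnd ℂ) (g₃' x) * y' x with hCdef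
  -- pointwise identity on Ioo
  have hz'eq : ∀ x ∈ Set.Ioo (0:ℝ) L, z' x = Complex.I * (lam : ℂ) * y' x - g₃' x := by
    intro x hx
    have hxK : x ∈ K := Set.Ioo_subset_Icc_self hx
    have h1 : HasDerivAt z (Complex.I * (lam : ℂ) * y' x - g₃' x) x := by
      have h2 : HasDerivAt (fun t => Complex.I * (lam : ℂ) * y t - g₃ t)
          (Complex.I * (lam : ℂ) * y' x - g₃' x) x :=
        ((hy x hxK).const_mul _).sub (hg₃ x hxK)
      refine h2.congr_of_eventuallyEq ?_
      filter_upwards [Ioo_mem_nhds hx.1 hx.2] with t ht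
      have := heq3 t ht
      linear_combination -this
    exact (hz x hxK).unique h1
  have hptwise : ∀ x ∈ Set.Ioo (0:ℝ) L,
      F' x = A x + Complex.I * (lam : ℂ) * Zc x - B x - D x
        - Complex.I * (lam : ℂ) * Yc x - C x := by
    intro x hx
    have hy''eq : y'' x = Complex.I * (lam : ℂ) * z x - (c x : ℂ) * v x - g₄ x := by
      have := heq4 x hx
      linear_combination -this
    have hz'x := hz'eq x hx
    simp only [hF'def, hAdef, hZcdef, hBdef, hDdef, hYcdef, hCdef, hy''eq, hz'x,
      map_sub, map_mul, Complex.conj_I, Complex.conj_ofReal]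
    ring
  -- integrabilities
  have hAint : IntervalIntegrable A volume 0 L :=
    (((hθ'C.mul hy'cont).mul hzb).mono (by rw [hIcc])).intervalIntegrable
  have hZcint : IntervalIntegrable Zc volume 0 L :=
    (((hθC.mul (hzc.mul hzb)).mono (by rw [hIcc]))).intervalIntegrable
  have hcind : (fun x => ((c x : ℝ) : ℂ)) = (Set.Ioo α γ).indicator (fun _ => (c₀ : ℂ)) := by
    funext x
    rw [hc]
    split_ifs with h <;> simp [Set.indicator_apply, Set.mem_Ioo, h]
  have hcint : IntervalIntegrable (fun x => ((c x : ℝ) : ℂ)) volume 0 L := by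
    rw [hcind, intervalIntegrable_iff]
    exact (MeasureTheory.integrable_indicator_iff measurableSet_Ioo).2
      (MeasureTheory.integrableOn_const (lt_of_le_of_lt
        (MeasureTheory.Measure.restrict_apply_le _ _) (by simp [Real.volume_Ioo])).ne)
  have hBint : IntervalIntegrable B volume 0 L := by
    have : B = fun x => ((c x : ℝ) : ℂ) * ((θ x : ℂ) * v x * (starRingEnd ℂ) (z x)) := by
      funext x; simp [hBdef]; ring
    rw [this]
    exact hcint.mul_continuousOn (by rw [hIcc]; exact (hθC.mul hvc).mul hzb)
  have hDint : IntervalIntegrable D volume 0 L :=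
    (((hθC.mul hg₄c).mul hzb).mono (by rw [hIcc])).intervalIntegrable
  have hYcint : IntervalIntegrable Yc volume 0 L :=
    ((hθC.mul (hy'cont.mul hy'b)).mono (by rw [hIcc])).intervalIntegrable
  have hCint : IntervalIntegrable C volume 0 L :=
    (((hθC.mul hg₃'b).mul hy'cont).mono (by rw [hIcc])).intervalIntegrable
  -- integral of F' equals combination
  have hcongr : ∫ x in (0:ℝ)..L, F' x
      = ∫ x in (0:ℝ)..L, (A x + Complex.I * (lam : ℂ) * Zc x - B x - D x
          - Complex.I * (lam : ℂ) * Yc x - C x) := by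
    apply intervalIntegral.integral_congr_ae
    have hL : ∀ᵐ (x : ℝ), x ≠ L := by
      rw [MeasureTheory.ae_iff]
      have : {x : ℝ | ¬ x ≠ L} = {L} := by ext t; simp
      rw [this]
      exact Real.volume_singleton
    filter_upwards [hL] with x hxL hx
    rw [Set.uIoc_of_le h0L] at hx
    exact hptwise x ⟨hx.1, lt_of_le_of_ne hx.2 hxL⟩
  have hsplit : ∫ x in (0:ℝ)..L, (A x + Complex.I * (lam : ℂ) * Zc x - B x - D x
        - Complex.I * (lam : ℂ) * Yc x - C x)
      = (∫ x in (0:ℝ)..L, A x) + Complex.I * (lam : ℂ) * (∫ x in (0:ℝ)..L, Zc x)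
        - (∫ x in (0:ℝ)..L, B x) - (∫ x in (0:ℝ)..L, D x)
        - Complex.I * (lam : ℂ) * (∫ x in (0:ℝ)..L, Yc x) - (∫ x in (0:ℝ)..L, C x) := by
    rw [intervalIntegral.integral_sub (((((hAint.add (hZcint.const_mul _)).sub hBint).sub
          hDint).sub (hYcint.const_mul _))) hCint,
        intervalIntegral.integral_sub ((((hAint.add (hZcint.const_mul _)).sub hBint).sub
          hDint)) (hYcint.const_mul _),
        intervalIntegral.integral_sub (((hAint.add (hZcint.const_mul _)).sub hBint)) hDint,
        intervalIntegral.integral_sub ((hAint.add (hZcint.const_mul _))) hBint,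
        intervalIntegral.integral_add hAint (hZcint.const_mul _),
        intervalIntegral.integral_const_mul, intervalIntegral.integral_const_mul]
  -- real values of Zc and Yc integrals
  have hZr : ∫ x in (0:ℝ)..L, Zc x = ((∫ x in (0:ℝ)..L, θ x * ‖z x‖ ^ 2 : ℝ) : ℂ) := by
    rw [← intervalIntegral.integral_ofReal]
    apply intervalIntegral.integral_congr
    intro x _
    simp [hZcdef, Complex.mul_conj, Complex.normSq_eq_norm_sq]
  have hYr : ∫ x in (0:ℝ)..L, Yc x = ((∫ x in (0:ℝ)..L, θ x * ‖y' x‖ ^ 2 : ℝ) : ℂ) := by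
    rw [← intervalIntegral.integral_ofReal]
    apply intervalIntegral.integral_congr
    intro x _
    simp [hYcdef, Complex.mul_conj, Complex.normSq_eq_norm_sq]
  set Yr := ∫ x in (0:ℝ)..L, θ x * ‖y' x‖ ^ 2 with hYrdef
  set Zr := ∫ x in (0:ℝ)..L, θ x * ‖z x‖ ^ 2 with hZrdef
  have hmain : (0:ℂ) = (∫ x in (0:ℝ)..L, A x) + Complex.I * (lam : ℂ) * (Zr : ℂ)
      - (∫ x in (0:ℝ)..L, B x) - (∫ x in (0:ℝ)..L, D x)
      - Complex.I * (lam : ℂ) * (Yr : ℂ) - (∫ x in (0:ℝ)..L, C x) := by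
    rw [← hYr, ← hZr, ← hsplit, ← hcongr, hFint]
  -- take imaginary part after multiplying by lam⁻¹
  have hmul := congrArg (fun w => ((lam : ℂ)⁻¹ * w).im) hmain
  simp only [mul_zero, Complex.zero_im, mul_sub, mul_add] at hmul
  have hlamC : (lam : ℂ) ≠ 0 := by exact_mod_cast hlam
  have hIlam : (lam : ℂ)⁻¹ * (Complex.I * (lam:ℂ) * (Zr:ℂ)) = Complex.I * (Zr:ℂ) := by
    field_simp
  have hIlam' : (lam : ℂ)⁻¹ * (Complex.I * (lam:ℂ) * (Yr:ℂ)) = Complex.I * (Yr:ℂ) := by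
    field_simp
  rw [hIlam, hIlam'] at hmul
  simp only [Complex.sub_im, Complex.add_im, Complex.mul_im, Complex.I_re, Complex.I_im,
    Complex.ofReal_re, Complex.ofReal_im] at hmul ⊢
  linarith [hmul]
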